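/- Let f : (0,1) → ℝ be integrable, 0 < s < 1, and suppose a : (0,1) → [0,1] is measurable with ∫ a dm = s and ∫ f·a dm = ∫₀ˢ λ(t; f) dt. If λ(f) is not constant on any left neighbourhood of s, then a equals the indicator function of {u : f(u) > λ(s; f)} almost everywhere. -/

import Mathlib

open MeasureTheory Set

/-- The decreasing rearrangement (spectral scale) of `f` on `(0,1)`. -/
noncomputable def rr (f : ℝ → ℝ) (t : ℝ) : ℝ :=
  sInf {s : ℝ | volume {u ∈ Ioo (0:ℝ) 1 | s < f u} ≤ ENNReal.ofReal t}

/-- Hardy–Littlewood–Pólya majorisation `g ≺ f` on `(0,1)`. -/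
def Maj (g f : ℝ → ℝ) : Prop :=
  (∀ s ∈ Ico (0:ℝ) 1, (∫ t in Ioo (0:ℝ) s, rr g t) ≤ ∫ t in Ioo (0:ℝ) s, rr f t) ∧
    (∫ t in Ioo (0:ℝ) 1, rr g t) = ∫ t in Ioo (0:ℝ) 1, rr f t

/-- The orbit `Ω(y)` of all integrable functions on `(0,1)` majorised by `y`. -/
def Omega (y : ℝ → ℝ) : Set (ℝ → ℝ) :=
  {x | IntegrableOn x (Ioo (0:ℝ) 1) ∧ Maj x y}

/-- `x` is an extreme point of the convex set `Ω` (functions identified a.e. on `(0,1)`). -/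
def ExtremePt (Ω : Set (ℝ → ℝ)) (x : ℝ → ℝ) : Prop :=
  x ∈ Ω ∧ ∀ x₁ ∈ Ω, ∀ x₂ ∈ Ω,
    (∀ᵐ u ∂(volume.restrict (Ioo (0:ℝ) 1)), x u = (x₁ u + x₂ u) / 2) →
    (∀ᵐ u ∂(volume.restrict (Ioo (0:ℝ) 1)), x₁ u = x₂ u)

noncomputable def phi (f : ℝ → ℝ) (c : ℝ) : ENNReal :=
  volume {u ∈ Ioo (0:ℝ) 1 | c < f u}

lemma rr_def' (f : ℝ → ℝ) (t : ℝ) :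
    rr f t = sInf {c : ℝ | phi f c ≤ ENNReal.ofReal t} := rfl

lemma phi_anti (f : ℝ → ℝ) : Antitone (phi f) := by
  intro c c' h
  exact measure_mono (fun u hu => ⟨hu.1, lt_of_le_of_lt h hu.2⟩)

lemma phi_le_one (f : ℝ → ℝ) (c : ℝ) : phi f c ≤ 1 := by
  calc phi f c ≤ volume (Ioo (0:ℝ) 1) := measure_mono (fun u hu => hu.1)
  _ = 1 := by simp [Real.volume_Ioo]

lemma phi_ne_top (f : ℝ → ℝ) (c : ℝ) : phi f c ≠ ⊤ :=
  fun h => by simpa [h] using phi_le_one f c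

/-- right continuity -/
lemma phi_iSup (f : ℝ → ℝ) (c : ℝ) :
    phi f c = ⨆ n : ℕ, phi f (c + 1/(n+1)) := by
  have hset : {u ∈ Ioo (0:ℝ) 1 | c < f u}
      = ⋃ n : ℕ, {u ∈ Ioo (0:ℝ) 1 | c + 1/(n+1) < f u} := by
    ext u
    simp only [mem_setOf_eq, mem_iUnion]
    constructor
    · rintro ⟨h1, h2⟩
      obtain ⟨n, hn⟩ := exists_nat_one_div_lt (sub_pos.2 h2)
      exact ⟨n, h1, by linarith [hn]⟩
    · rintro ⟨n, h1, h2⟩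
      have : (0:ℝ) < 1/(n+1) := by positivity
      exact ⟨h1, by linarith⟩
  rw [phi, hset]
  apply Monotone.measure_iUnion
  intro m n hmn u hu
  refine ⟨hu.1, lt_of_le_of_lt ?_ hu.2⟩
  have hc : (m:ℝ) ≤ (n:ℝ) := by exact_mod_cast hmn
  have : (1:ℝ)/(n+1) ≤ 1/(m+1) := by
    apply one_div_le_one_div_of_le (by positivity)
    linarith
  linarith

lemma phi_tendsto_zero (f : ℝ → ℝ) (hm : Measurable f) :
    ∀ t : ℝ, 0 < t → ∃ c : ℝ, phi f c ≤ ENNReal.ofReal t := by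
  intro t ht
  have hset : (⋂ n : ℕ, {u ∈ Ioo (0:ℝ) 1 | (n:ℝ) < f u}) = ∅ := by
    ext u
    simp only [mem_iInter, mem_setOf_eq, mem_empty_iff_false, iff_false, not_forall]
    obtain ⟨n, hn⟩ := exists_nat_gt (f u)
    exact ⟨n, fun h => absurd h.2 (not_lt.2 hn.le)⟩
  have hanti : Antitone (fun n : ℕ => {u ∈ Ioo (0:ℝ) 1 | (n:ℝ) < f u}) := by
    intro m n hmn u hu
    exact ⟨hu.1, lt_of_le_of_lt (by exact_mod_cast hmn) hu.2⟩
  have hmeas : ∀ n : ℕ, NullMeasurableSet {u ∈ Ioo (0:ℝ) 1 | (n:ℝ) < f u} volume := by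
    intro n
    exact (measurableSet_Ioo.inter (hm measurableSet_Ioi)).nullMeasurableSet
  have h0 : (⨅ n : ℕ, phi f (n : ℝ)) = 0 := by
    have := hanti.measure_iInter hmeas ⟨0, by exact_mod_cast phi_ne_top f 0⟩
    rw [hset] at this
    simpa [phi] using this.symm
  have hpos : (0:ENNReal) < ENNReal.ofReal t := by simpa using ht
  rw [← h0] at hpos
  obtain ⟨n, hn⟩ := iInf_lt_iff.mp hpos
  exact ⟨n, hn.le⟩

lemma sSet_nonempty (f : ℝ → ℝ) (hm : Measurable f) {t : ℝ} (ht : 0 < t) :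
    {c : ℝ | phi f c ≤ ENNReal.ofReal t}.Nonempty :=
  (phi_tendsto_zero f hm t ht)

lemma sSet_bddBelow (f : ℝ → ℝ) {t : ℝ} (ht : t < 1) :
    BddBelow {c : ℝ | phi f c ≤ ENNReal.ofReal t} := by
  have hset : (⋃ n : ℕ, {u ∈ Ioo (0:ℝ) 1 | (-(n:ℝ)) < f u}) = Ioo (0:ℝ) 1 := by
    ext u
    simp only [mem_iUnion, mem_setOf_eq]
    constructor
    · rintro ⟨n, h, _⟩; exact h
    · intro h
      obtain ⟨n, hn⟩ := exists_nat_gt (-(f u))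
      exact ⟨n, h, by linarith⟩
  have hmono : Monotone (fun n : ℕ => {u ∈ Ioo (0:ℝ) 1 | (-(n:ℝ)) < f u}) := by
    intro m n hmn u hu
    refine ⟨hu.1, lt_of_le_of_lt ?_ hu.2⟩
    simp only [neg_le_neg_iff]
    exact_mod_cast hmn
  have h1 : (⨆ n : ℕ, phi f (-(n:ℝ))) = 1 := by
    have := Monotone.measure_iUnion (μ := volume) hmono
    rw [hset] at this
    rw [Real.volume_Ioo] at this
    simp only [sub_zero, ENNReal.ofReal_one] at this
    exact (by simpa [phi] using this.symm)
  have hlt : ENNReal.ofReal t < 1 := by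
    rw [← ENNReal.ofReal_one]
    exact (ENNReal.ofReal_lt_ofReal_iff one_pos).mpr ht
  rw [← h1] at hlt
  obtain ⟨n, hn⟩ := lt_iSup_iff.mp hlt
  refine ⟨-(n:ℝ), fun c hc => ?_⟩
  by_contra hcn
  push_neg at hcn
  exact absurd hc (not_le.2 (lt_of_lt_of_le hn (phi_anti f hcn.le)))

lemma phi_rr_le (f : ℝ → ℝ) (hm : Measurable f) {t : ℝ} (ht : 0 < t) :
    phi f (rr f t) ≤ ENNReal.ofReal t := by
  rw [phi_iSup]
  refine iSup_le fun n => ?_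
  have hpos : (0:ℝ) < 1/(n+1) := by positivity
  have hlt : sInf {c : ℝ | phi f c ≤ ENNReal.ofReal t} < rr f t + 1/(n+1) := by
    rw [rr_def']; linarith [lt_add_of_pos_right (rr f t) hpos, (rr_def' f t).symm]
  obtain ⟨x, hx, hxlt⟩ := exists_lt_of_csInf_lt (sSet_nonempty f hm ht) hlt
  exact le_trans (phi_anti f hxlt.le) hx

lemma rr_mem_sSet (f : ℝ → ℝ) (hm : Measurable f) {t : ℝ} (ht : 0 < t) :
    rr f t ∈ {c : ℝ | phi f c ≤ ENNReal.ofReal t} := phi_rr_le f hm ht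

lemma lt_rr_iff (f : ℝ → ℝ) (hm : Measurable f) {t : ℝ} (ht : t ∈ Ioo (0:ℝ) 1) (c : ℝ) :
    c < rr f t ↔ ENNReal.ofReal t < phi f c := by
  constructor
  · intro h
    by_contra hc
    push_neg at hc
    have : rr f t ≤ c := by
      rw [rr_def']
      exact csInf_le (sSet_bddBelow f ht.2) hc
    linarith
  · intro h
    by_contra hc
    push_neg at hc
    exact absurd (le_trans (phi_anti f hc) (phi_rr_le f hm ht.1)) (not_le.2 h)

lemma rr_antiOn (f : ℝ → ℝ) (hm : Measurable f) {t t' : ℝ} (ht : t ∈ Ioo (0:ℝ) 1)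
    (ht' : t' ∈ Ioo (0:ℝ) 1) (h : t ≤ t') : rr f t' ≤ rr f t := by
  rw [rr_def', rr_def']
  apply csInf_le_csInf (sSet_bddBelow f ht'.2) (sSet_nonempty f hm ht.1)
  intro c hc
  exact le_trans hc (ENNReal.ofReal_le_ofReal h)

lemma rr_superlevel (f : ℝ → ℝ) (hm : Measurable f) (c : ℝ) :
    {t ∈ Ioo (0:ℝ) 1 | c < rr f t} = Ioo 0 (min 1 (phi f c).toReal) := by
  ext t
  simp only [mem_setOf_eq, mem_Ioo, lt_min_iff]
  constructor
  · rintro ⟨⟨h0, h1⟩, hc⟩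
    refine ⟨h0, h1, ?_⟩
    have := (lt_rr_iff f hm ⟨h0, h1⟩ c).1 hc
    exact (ENNReal.ofReal_lt_iff_lt_toReal h0.le (phi_ne_top f c)).1 this
  · rintro ⟨h0, h1, h2⟩
    refine ⟨⟨h0, h1⟩, (lt_rr_iff f hm ⟨h0, h1⟩ c).2 ?_⟩
    exact (ENNReal.ofReal_lt_iff_lt_toReal h0.le (phi_ne_top f c)).2 h2

lemma phi_rr_eq (f : ℝ → ℝ) (hm : Measurable f) {s : ℝ} (hs : s ∈ Ioo (0:ℝ) 1)
    (hnc : ∀ ε ∈ Ioo (0:ℝ) s, ∃ t₁ ∈ Ioo (s - ε) s, ∃ t₂ ∈ Ioo (s - ε) s,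
      rr f t₁ ≠ rr f t₂) :
    phi f (rr f s) = ENNReal.ofReal s := by
  have hle : phi f (rr f s) ≤ ENNReal.ofReal s := phi_rr_le f hm hs.1
  rcases eq_or_lt_of_le hle with h | hlt
  · exact h
  exfalso
  set p := (phi f (rr f s)).toReal with hp
  have hpnn : 0 ≤ p := ENNReal.toReal_nonneg
  have hps : p < s := by
    have := ENNReal.toReal_lt_of_lt_ofReal hlt
    exact this
  set s' := (p + s) / 2 with hs'
  have hs'0 : 0 < s' := by rw [hs']; linarith [hs.1]
  have hs's : s' < s := by rw [hs']; linarith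
  have hps' : p < s' := by rw [hs']; linarith
  have hε : s - s' ∈ Ioo (0:ℝ) s := ⟨by linarith, by linarith⟩
  obtain ⟨t₁, ht₁, t₂, ht₂, hne⟩ := hnc (s - s') hε
  have key : ∀ t ∈ Ioo (s - (s - s')) s, rr f t = rr f s := by
    intro t ht
    have htIoo : t ∈ Ioo (0:ℝ) 1 := ⟨lt_trans (by linarith : (0:ℝ) < s') (by linarith [ht.1]), lt_trans ht.2 hs.2⟩
    refine le_antisymm ?_ (rr_antiOn f hm htIoo hs ht.2.le)
    rw [rr_def']
    apply csInf_le (sSet_bddBelow f htIoo.2)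
    show phi f (rr f s) ≤ ENNReal.ofReal t
    have h1 : phi f (rr f s) = ENNReal.ofReal p :=
      (ENNReal.ofReal_toReal (phi_ne_top f _)).symm
    rw [h1]
    exact ENNReal.ofReal_le_ofReal (by linarith [ht.1])
  rw [key t₁ ht₁, key t₂ ht₂] at hne
  exact hne rfl

lemma G1_measurable (f : ℝ → ℝ) (hm : Measurable f) (l : ℝ) :
    Measurable ((Ioo (0:ℝ) 1).indicator (fun t => max (rr f t - l) 0)) := by
  apply measurable_of_Ioi
  intro c
  rcases lt_or_ge c 0 with hc | hc
  · have : (Ioo (0:ℝ) 1).indicator (fun t => max (rr f t - l) 0) ⁻¹' Ioi c = univ := by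
      ext t
      simp only [mem_preimage, mem_Ioi, mem_univ, iff_true, indicator]
      split
      · exact lt_of_lt_of_le hc (le_max_right _ _)
      · exact hc
    rw [this]; exact MeasurableSet.univ
  · have : (Ioo (0:ℝ) 1).indicator (fun t => max (rr f t - l) 0) ⁻¹' Ioi c
        = {t ∈ Ioo (0:ℝ) 1 | l + c < rr f t} := by
      ext t
      by_cases ht : t ∈ Ioo (0:ℝ) 1
      · simp only [mem_preimage, mem_Ioi, mem_setOf_eq, indicator_of_mem ht, lt_max_iff]
        constructor
        · rintro (h | h)
          · exact ⟨ht, by linarith⟩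
          · exact absurd h (not_lt.2 hc)
        · rintro ⟨_, h⟩
          exact Or.inl (by linarith)
      · simp only [mem_preimage, mem_Ioi, mem_setOf_eq, indicator_of_notMem ht]
        constructor
        · intro h; exact absurd h (not_lt.2 hc)
        · rintro ⟨h, _⟩; exact absurd h ht
    rw [this, rr_superlevel f hm (l + c)]
    exact measurableSet_Ioo

lemma layercake_core (f : ℝ → ℝ) (hm : Measurable f) {s : ℝ} (hs : s ∈ Ioo (0:ℝ) 1)
    (hphi : phi f (rr f s) = ENNReal.ofReal s) :
    (∫⁻ u in Ioo (0:ℝ) 1, ENNReal.ofReal (max (f u - rr f s) 0))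
      = ∫⁻ t in Ioo (0:ℝ) 1,
          ENNReal.ofReal ((Ioo (0:ℝ) 1).indicator (fun t' => max (rr f t' - rr f s) 0) t) := by
  set l := rr f s with hl
  set μ := volume.restrict (Ioo (0:ℝ) 1) with hμ
  have hFm : AEMeasurable (fun u => max (f u - l) 0) μ :=
    ((hm.sub measurable_const).max measurable_const).aemeasurable
  have hGm : AEMeasurable ((Ioo (0:ℝ) 1).indicator (fun t' => max (rr f t' - l) 0)) μ :=
    (G1_measurable f hm l).aemeasurable
  have hFnn : 0 ≤ᵐ[μ] (fun u => max (f u - l) 0) := ae_of_all _ fun u => le_max_right _ _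
  have hGnn : 0 ≤ᵐ[μ] ((Ioo (0:ℝ) 1).indicator (fun t' => max (rr f t' - l) 0)) := by
    refine ae_of_all _ fun t => ?_
    by_cases ht : t ∈ Ioo (0:ℝ) 1
    · rw [indicator_of_mem ht]; exact le_max_right _ _
    · simp [indicator_of_notMem ht]
  rw [lintegral_eq_lintegral_meas_lt μ hFnn hFm, lintegral_eq_lintegral_meas_lt μ hGnn hGm]
  apply lintegral_congr_ae
  filter_upwards [self_mem_ae_restrict measurableSet_Ioi] with t ht
  have ht0 : (0:ℝ) < t := ht
  have hF : μ {u | t < max (f u - l) 0} = phi f (l + t) := by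
    rw [hμ, Measure.restrict_apply' measurableSet_Ioo]
    congr 1
    ext u
    simp only [mem_inter_iff, mem_setOf_eq, lt_max_iff, mem_Ioo]
    constructor
    · rintro ⟨(h | h), hu⟩
      · exact ⟨hu, by linarith⟩
      · linarith
    · rintro ⟨hu, h⟩
      exact ⟨Or.inl (by linarith), hu⟩
  have hG : μ {t' | t < (Ioo (0:ℝ) 1).indicator (fun t'' => max (rr f t'' - l) 0) t'}
      = phi f (l + t) := by
    rw [hμ, Measure.restrict_apply' measurableSet_Ioo]
    have hseteq : {t' | t < (Ioo (0:ℝ) 1).indicator (fun t'' => max (rr f t'' - l) 0) t'}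
        ∩ Ioo (0:ℝ) 1 = {t' ∈ Ioo (0:ℝ) 1 | l + t < rr f t'} := by
      ext t'
      simp only [mem_inter_iff, mem_setOf_eq]
      constructor
      · rintro ⟨h1, h2⟩
        rw [indicator_of_mem h2, lt_max_iff] at h1
        rcases h1 with h | h
        · exact ⟨h2, by linarith⟩
        · linarith
      · rintro ⟨h1, h2⟩
        exact ⟨by rw [indicator_of_mem h1, lt_max_iff]; exact Or.inl (by linarith), h1⟩
    rw [hseteq, rr_superlevel f hm (l + t), Real.volume_Ioo]
    have hle1 : phi f (l + t) ≤ ENNReal.ofReal s := by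
      rw [← hphi]
      exact phi_anti f (by linarith)
    have htr : (phi f (l + t)).toReal ≤ s := by
      rw [← ENNReal.ofReal_toReal (phi_ne_top f (l + t))] at hle1
      exact (ENNReal.ofReal_le_ofReal_iff (le_trans hs.1.le (le_refl s))).1 hle1
    have hmin : min 1 (phi f (l + t)).toReal = (phi f (l + t)).toReal :=
      min_eq_right (le_trans htr (by linarith [hs.2]))
    rw [hmin, sub_zero, ENNReal.ofReal_toReal (phi_ne_top f (l + t))]
  rw [hF, hG]

theorem core (f : ℝ → ℝ) (hm : Measurable f) (hf : IntegrableOn f (Ioo (0:ℝ) 1))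
    (s : ℝ) (hs : s ∈ Ioo (0:ℝ) 1)
    (a : ℝ → ℝ) (ha : Measurable a) (ha01 : ∀ u, a u ∈ Icc (0:ℝ) 1)
    (hsum : (∫ u in Ioo (0:ℝ) 1, a u) = s)
    (hopt : (∫ u in Ioo (0:ℝ) 1, f u * a u) = ∫ t in Ioo (0:ℝ) s, rr f t)
    (hnc : ∀ ε ∈ Ioo (0:ℝ) s, ∃ t₁ ∈ Ioo (s - ε) s, ∃ t₂ ∈ Ioo (s - ε) s,
      rr f t₁ ≠ rr f t₂) :
    ∀ᵐ u ∂(volume.restrict (Ioo (0:ℝ) 1)),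
      a u = Set.indicator {u : ℝ | rr f s < f u} (fun _ => (1:ℝ)) u := by
  set l := rr f s with hl
  set μ := volume.restrict (Ioo (0:ℝ) 1) with hμ
  haveI : IsFiniteMeasure μ :=
    ⟨by rw [hμ, Measure.restrict_apply MeasurableSet.univ]; simp [Real.volume_Ioo]⟩
  have hphi : phi f l = ENNReal.ofReal s := phi_rr_eq f hm hs hnc
  set A := {u : ℝ | l < f u} with hA_def
  have hA : MeasurableSet A := hm measurableSet_Ioi
  have hμA : μ A = ENNReal.ofReal s := by
    rw [hμ, Measure.restrict_apply' measurableSet_Ioo, ← hphi]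
    congr 1
    ext u
    simp only [hA_def, mem_inter_iff, mem_setOf_eq, mem_Ioo]
    tauto
  have hμA_toReal : (μ A).toReal = s := by rw [hμA, ENNReal.toReal_ofReal hs.1.le]
  set F := fun u => max (f u - l) 0 with hF_def
  set G1 := (Ioo (0:ℝ) 1).indicator (fun t => max (rr f t - l) 0) with hG1_def
  have hFnn : ∀ u, 0 ≤ F u := fun u => le_max_right _ _
  have hG1nn : ∀ t, 0 ≤ G1 t := by
    intro t
    by_cases ht : t ∈ Ioo (0:ℝ) 1
    · rw [hG1_def, indicator_of_mem ht]; exact le_max_right _ _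
    · rw [hG1_def, indicator_of_notMem ht]
  have hfi : Integrable f μ := hf
  have hFi : Integrable F μ := (hfi.sub (integrable_const l)).pos_part
  have hlayer := layercake_core f hm hs hphi
  have hFlint : (∫⁻ u, ENNReal.ofReal (F u) ∂μ) = ENNReal.ofReal (∫ u, F u ∂μ) :=
    (ofReal_integral_eq_lintegral_ofReal hFi (ae_of_all _ hFnn)).symm
  have hG1i : Integrable G1 μ := by
    refine ⟨(G1_measurable f hm l).aestronglyMeasurable, ?_⟩
    rw [HasFiniteIntegral]
    have : (∫⁻ t, ‖G1 t‖ₑ ∂μ) = ∫⁻ t, ENNReal.ofReal (G1 t) ∂μ := by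
      apply lintegral_congr
      intro t
      exact Real.enorm_eq_ofReal (hG1nn t)
    rw [this, ← hlayer, hFlint]
    exact ENNReal.ofReal_lt_top
  have hFG : (∫ u, F u ∂μ) = ∫ t, G1 t ∂μ := by
    have h1 : ENNReal.ofReal (∫ u, F u ∂μ) = ENNReal.ofReal (∫ t, G1 t ∂μ) := by
      rw [ofReal_integral_eq_lintegral_ofReal hFi (ae_of_all _ hFnn),
        ofReal_integral_eq_lintegral_ofReal hG1i (ae_of_all _ hG1nn)]
      exact hlayer
    have h2 : 0 ≤ ∫ u, F u ∂μ := integral_nonneg hFnn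
    have h3 : 0 ≤ ∫ t, G1 t ∂μ := integral_nonneg hG1nn
    rwa [ENNReal.ofReal_eq_ofReal_iff h2 h3] at h1
  -- structure of rr around s
  have hrr_gt : ∀ t ∈ Ioo (0:ℝ) s, l < rr f t := by
    intro t ht
    refine (lt_rr_iff f hm ⟨ht.1, lt_trans ht.2 hs.2⟩ l).2 ?_
    rw [hphi]
    exact (ENNReal.ofReal_lt_ofReal_iff hs.1).2 ht.2
  have hrr_le : ∀ t, s ≤ t → t < 1 → rr f t ≤ l := by
    intro t h1 h2
    by_contra h
    push_neg at h
    have h3 := (lt_rr_iff f hm ⟨lt_of_lt_of_le hs.1 h1, h2⟩ l).1 h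
    rw [hphi] at h3
    exact absurd (ENNReal.ofReal_le_ofReal h1) (not_le.2 h3)
  -- compute ∫ G1
  have hG1a : (∫ t, G1 t ∂μ) = ∫ t in Ioo (0:ℝ) s, (rr f t - l) := by
    rw [hμ]
    rw [setIntegral_eq_of_subset_of_forall_diff_eq_zero measurableSet_Ioo
      (Ioo_subset_Ioo le_rfl hs.2.le) ?h0]
    · apply setIntegral_congr_fun measurableSet_Ioo
      intro t ht
      rw [hG1_def]
      have htIoo : t ∈ Ioo (0:ℝ) 1 := ⟨ht.1, lt_trans ht.2 hs.2⟩
      rw [indicator_of_mem htIoo]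
      exact max_eq_left (sub_nonneg.2 (hrr_gt t ht).le)
    case h0 =>
      intro t ht
      obtain ⟨htIoo, hts⟩ := ht
      have hst : s ≤ t := by
        by_contra h
        push_neg at h
        exact hts ⟨htIoo.1, h⟩
      rw [hG1_def, indicator_of_mem htIoo]
      exact max_eq_right (sub_nonpos.2 (hrr_le t hst htIoo.2))
  have hIntRl : IntegrableOn (fun t => rr f t - l) (Ioo (0:ℝ) s) volume := by
    have h1 : IntegrableOn G1 (Ioo (0:ℝ) s) volume := by
      have h2 : IntegrableOn G1 (Ioo (0:ℝ) 1) volume := by rw [hμ] at hG1i; exact hG1i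
      exact h2.mono_set (Ioo_subset_Ioo le_rfl hs.2.le)
    apply h1.congr_fun ?_ measurableSet_Ioo
    intro t ht
    have htIoo : t ∈ Ioo (0:ℝ) 1 := ⟨ht.1, lt_trans ht.2 hs.2⟩
    rw [hG1_def, indicator_of_mem htIoo]
    exact max_eq_left (sub_nonneg.2 (hrr_gt t ht).le)
  have hGint : (∫ t in Ioo (0:ℝ) s, rr f t) = (∫ u, F u ∂μ) + l * s := by
    have h1 : (∫ t in Ioo (0:ℝ) s, rr f t) = ∫ t in Ioo (0:ℝ) s, ((rr f t - l) + l) := by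
      apply setIntegral_congr_fun measurableSet_Ioo
      intro t _
      ring
    rw [h1, integral_add hIntRl (integrableOn_const (by simp [Real.volume_Ioo]))]
    rw [← hG1a, hFG, setIntegral_const, measureReal_def]
    rw [Real.volume_Ioo, sub_zero, ENNReal.toReal_ofReal hs.1.le, smul_eq_mul]
    ring
  -- bathtub argument
  set I := A.indicator (fun _ => (1:ℝ)) with hI_def
  have hIF : (fun u => (f u - l) * I u) = F := by
    funext u
    by_cases hu : u ∈ A
    · rw [hI_def, indicator_of_mem hu]
      have : l < f u := hu
      rw [hF_def]
      simp only [mul_one]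
      exact (max_eq_left (by linarith)).symm
    · rw [hI_def, indicator_of_notMem hu]
      have : ¬ l < f u := hu
      push_neg at this
      rw [hF_def]
      simp only [mul_zero]
      exact (max_eq_right (by linarith)).symm
  have habdd : ∃ C, ∀ u, ‖a u‖ ≤ C := by
    refine ⟨1, fun u => ?_⟩
    rw [Real.norm_eq_abs, abs_le]
    exact ⟨by linarith [(ha01 u).1], (ha01 u).2⟩
  have haI : Integrable a μ := by
    have := Integrable.bdd_mul (integrable_const (1:ℝ) (μ := μ)) ha.aestronglyMeasurable (ae_of_all _ habdd.choose_spec)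
    simpa using this
  have hfla : Integrable (fun u => (f u - l) * a u) μ := by
    have := Integrable.bdd_mul (hfi.sub (integrable_const l)) ha.aestronglyMeasurable (ae_of_all _ habdd.choose_spec)
    apply this.congr
    refine ae_of_all _ fun u => ?_
    simp only [Pi.sub_apply]
    ring
  have hIi : Integrable I μ := (integrable_const (1:ℝ)).indicator hA
  set h := fun u => (f u - l) * (a u - I u) with hh_def
  have hhi : Integrable h μ := by
    have heq : h = fun u => (f u - l) * a u - F u := by
      funext u
      rw [hh_def, ← hIF]
      ring
    rw [heq]
    exact hfla.sub hFi
  have hint_h : (∫ u, h u ∂μ) = 0 := by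
    have heq : h = fun u => (f u - l) * a u - F u := by
      funext u
      rw [hh_def, ← hIF]
      ring
    rw [heq, integral_sub hfla hFi]
    have h2 : (∫ u, (f u - l) * a u ∂μ) = (∫ u, f u * a u ∂μ) - l * s := by
      have h3 : (fun u => (f u - l) * a u) = fun u => f u * a u - l * a u := by
        funext u; ring
      have hfa : Integrable (fun u => f u * a u) μ := by
        have h4 := Integrable.bdd_mul hfi ha.aestronglyMeasurable (ae_of_all _ habdd.choose_spec)
        exact h4.congr (ae_of_all _ fun u => mul_comm (a u) (f u))
      rw [h3, integral_sub hfa (haI.const_mul l), integral_const_mul, hsum]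
    rw [h2, hopt, hGint]
    ring
  have hh_nonpos : ∀ u, h u ≤ 0 := by
    intro u
    show (f u - l) * (a u - I u) ≤ 0
    by_cases hu : u ∈ A
    · have h1 : l < f u := hu
      have h3 : I u = 1 := indicator_of_mem hu _
      rw [h3]
      have h2 := (ha01 u).2
      nlinarith
    · have h1 : ¬ l < f u := hu
      push_neg at h1
      have h3 : I u = 0 := indicator_of_notMem hu _
      rw [h3]
      have h2 := (ha01 u).1
      nlinarith
  have hh_ae : h =ᵐ[μ] 0 := by
    have hneg : (fun u => -h u) =ᵐ[μ] 0 := by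
      rw [← integral_eq_zero_iff_of_nonneg_ae (ae_of_all _ fun u => neg_nonneg.2 (hh_nonpos u))
        hhi.neg]
      rw [integral_neg, hint_h, neg_zero]
    filter_upwards [hneg] with u hu
    have : -h u = 0 := hu
    linarith [this]
  set k := fun u => a u - I u with hk_def
  have hki : Integrable k μ := haI.sub hIi
  have hknn : 0 ≤ᵐ[μ] k := by
    filter_upwards [hh_ae] with u hu
    have hu' : (f u - l) * (a u - I u) = 0 := hu
    rcases mul_eq_zero.1 hu' with h1 | h1
    · have hfu : f u = l := by linarith
      have huA : u ∉ A := by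
        rw [hA_def]
        simp only [mem_setOf_eq, hfu]
        exact lt_irrefl l
      show (0:ℝ) ≤ a u - I u
      rw [hI_def, indicator_of_notMem huA]
      linarith [(ha01 u).1]
    · show (0:ℝ) ≤ a u - I u
      linarith
  have hint_k : (∫ u, k u ∂μ) = 0 := by
    rw [hk_def]
    rw [integral_sub haI hIi, hsum, hI_def, integral_indicator_const (1:ℝ) hA, measureReal_def, hμA_toReal,
      smul_eq_mul, mul_one, sub_self]
  have hk_ae : k =ᵐ[μ] 0 := by
    rw [← integral_eq_zero_iff_of_nonneg_ae hknn hki]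
    exact hint_k
  filter_upwards [hk_ae] with u hu
  have : a u - I u = 0 := hu
  have : a u = I u := by linarith
  rw [this, hI_def]

theorem maximiser_is_indicator (f : ℝ → ℝ) (hf : IntegrableOn f (Ioo (0:ℝ) 1))
    (s : ℝ) (hs : s ∈ Ioo (0:ℝ) 1)
    (a : ℝ → ℝ) (ha : Measurable a) (ha01 : ∀ u, a u ∈ Icc (0:ℝ) 1)
    (hsum : (∫ u in Ioo (0:ℝ) 1, a u) = s)
    (hopt : (∫ u in Ioo (0:ℝ) 1, f u * a u) = ∫ t in Ioo (0:ℝ) s, rr f t)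
    (hnc : ∀ ε ∈ Ioo (0:ℝ) s, ∃ t₁ ∈ Ioo (s - ε) s, ∃ t₂ ∈ Ioo (s - ε) s,
      rr f t₁ ≠ rr f t₂) :
    ∀ᵐ u ∂(volume.restrict (Ioo (0:ℝ) 1)),
      a u = Set.indicator {u : ℝ | rr f s < f u} (fun _ => (1:ℝ)) u := by
  set μ := volume.restrict (Ioo (0:ℝ) 1) with hμ
  obtain ⟨g, hg0m, hfg⟩ := hf.aestronglyMeasurable
  have hgm : Measurable g := hg0m.measurable
  have hsets : ∀ c : ℝ, volume {u ∈ Ioo (0:ℝ) 1 | c < f u} = volume {u ∈ Ioo (0:ℝ) 1 | c < g u} := by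
    intro c
    have h1 : {u ∈ Ioo (0:ℝ) 1 | c < f u} = {u | c < f u} ∩ Ioo (0:ℝ) 1 := by
      ext u; simp only [mem_setOf_eq, mem_inter_iff]; tauto
    have h2 : {u ∈ Ioo (0:ℝ) 1 | c < g u} = {u | c < g u} ∩ Ioo (0:ℝ) 1 := by
      ext u; simp only [mem_setOf_eq, mem_inter_iff]; tauto
    rw [h1, h2, ← Measure.restrict_apply' measurableSet_Ioo,
      ← Measure.restrict_apply' measurableSet_Ioo]
    apply measure_congr
    filter_upwards [hfg] with u hu
    show (c < f u) = (c < g u)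
    rw [hu]
  have hrr : rr f = rr g := by
    funext t
    unfold rr
    congr 1
    ext c
    simp only [mem_setOf_eq, hsets c]
  have hgf : IntegrableOn g (Ioo (0:ℝ) 1) := hf.congr hfg
  have hopt' : (∫ u in Ioo (0:ℝ) 1, g u * a u) = ∫ t in Ioo (0:ℝ) s, rr g t := by
    rw [← hrr, ← hopt]
    apply integral_congr_ae
    filter_upwards [hfg] with u hu
    rw [hu]
  have hnc' : ∀ ε ∈ Ioo (0:ℝ) s, ∃ t₁ ∈ Ioo (s - ε) s, ∃ t₂ ∈ Ioo (s - ε) s,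
      rr g t₁ ≠ rr g t₂ := by
    rw [← hrr]; exact hnc
  have hcore := core g hgm hgf s hs a ha ha01 hsum hopt' hnc'
  filter_upwards [hcore, hfg] with u h1 h2
  rw [h1, ← hrr]
  by_cases hu : u ∈ {x : ℝ | rr f s < g x}
  · rw [indicator_of_mem hu,
      indicator_of_mem (show u ∈ {x : ℝ | rr f s < f x} by rw [mem_setOf_eq, h2]; exact hu)]
  · rw [indicator_of_notMem hu,
      indicator_of_notMem (show u ∉ {x : ℝ | rr f s < f x} by
        rw [mem_setOf_eq, h2]; exact hu)]
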